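/- Let p be a prime, q = p^a, and F ∈ F_q[x1, ..., xn] a polynomial. Write each variable xi = ∑_{j=1}^{a} z_{ij} μ_j for an F_p-basis {μ_j} of F_q. Then there exist polynomials G_1, ..., G_a ∈ F_p[z_{ij}] with deg G_l ≤ w_p(F) for all l, such that F(x) = ∑_{l=1}^a G_l(z) μ_l, where w_p(F) is the p-weight of F (max over monomials x^u of ∑_i σ_p(u_i)). -/

import Mathlib

open MvPolynomial

/-- The `p`-weight of a multivariable polynomial: the maximum over its monomials `x^u`
of the total base-`p` digit sum `σ_p(u₁) + ⋯ + σ_p(u_n)`. -/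
def pWeight {σ K : Type*} [CommSemiring K] (p : ℕ) (F : MvPolynomial σ K) : ℕ :=
  F.support.sup fun u => u.sum fun _ e => (Nat.digits p e).sum

/-- Auxiliary "linearized power": a polynomial whose evaluation at points fixed by
Frobenius equals the `e`-th power of the evaluation of `L`, with total degree bounded
by the base-`p` digit sum of `e`. -/
noncomputable def phiAux (p : ℕ) {σ K : Type*} [CommRing K] [Fact p.Prime] [CharP K p]
    (L : MvPolynomial σ K) : ℕ → MvPolynomial σ K
  | 0 => 1
  | (e + 1) =>
      L ^ ((e + 1) % p) *
        MvPolynomial.map (frobenius K p) (phiAux p L ((e + 1) / p))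
  decreasing_by exact Nat.div_lt_self (Nat.succ_pos e) (Fact.out (p := p.Prime)).one_lt

theorem totalDegree_map_le' {σ K : Type*} [CommSemiring K] (f : K →+* K)
    (P : MvPolynomial σ K) : (MvPolynomial.map f P).totalDegree ≤ P.totalDegree :=
  Finset.sup_mono (MvPolynomial.support_map_subset _ _)

theorem phiAux_totalDegree (p : ℕ) {σ K : Type*} [CommRing K] [Fact p.Prime] [CharP K p]
    (L : MvPolynomial σ K) (hL : L.totalDegree ≤ 1) (e : ℕ) :
    (phiAux p L e).totalDegree ≤ (Nat.digits p e).sum := by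
  induction e using Nat.strong_induction_on with
  | _ e ih =>
    match e with
    | 0 => simp [phiAux]
    | e + 1 =>
      have hp2 : 1 < p := (Fact.out (p := p.Prime)).one_lt
      rw [phiAux, Nat.digits_def' hp2 (Nat.succ_pos e), List.sum_cons]
      calc (L ^ ((e + 1) % p) *
            MvPolynomial.map (frobenius K p) (phiAux p L ((e + 1) / p))).totalDegree
          ≤ (L ^ ((e + 1) % p)).totalDegree +
            (MvPolynomial.map (frobenius K p) (phiAux p L ((e + 1) / p))).totalDegree :=
            totalDegree_mul _ _
        _ ≤ (e + 1) % p + (Nat.digits p ((e + 1) / p)).sum := by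
            refine add_le_add ?_ ((totalDegree_map_le' _ _).trans
              (ih _ (Nat.div_lt_self (Nat.succ_pos e) hp2)))
            calc (L ^ ((e + 1) % p)).totalDegree ≤ ((e + 1) % p) * L.totalDegree :=
                totalDegree_pow _ _
              _ ≤ ((e + 1) % p) * 1 := Nat.mul_le_mul_left _ hL
              _ = (e + 1) % p := Nat.mul_one _

theorem phiAux_eval (p : ℕ) {σ K : Type*} [CommRing K] [Fact p.Prime] [CharP K p]
    (L : MvPolynomial σ K) (z : σ → K) (hz : ∀ v, z v ^ p = z v) (e : ℕ) :
    MvPolynomial.eval z (phiAux p L e) = (MvPolynomial.eval z L) ^ e := by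
  induction e using Nat.strong_induction_on with
  | _ e ih =>
    match e with
    | 0 => simp [phiAux]
    | e + 1 =>
      have hp2 : 1 < p := (Fact.out (p := p.Prime)).one_lt
      rw [phiAux, map_mul, map_pow]
      have key : MvPolynomial.eval z
          (MvPolynomial.map (frobenius K p) (phiAux p L ((e + 1) / p))) =
          (MvPolynomial.eval z (phiAux p L ((e + 1) / p))) ^ p := by
        have h := MvPolynomial.eval₂_comp_left (frobenius K p) (RingHom.id K) z
          (phiAux p L ((e + 1) / p))
        rw [MvPolynomial.eval₂_id] at h
        rw [MvPolynomial.eval_map, ← frobenius_def, h, RingHom.comp_id]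
        congr 1
        funext v
        simp [Function.comp, frobenius_def, hz v]
      rw [key, ih _ (Nat.div_lt_self (Nat.succ_pos e) hp2), ← pow_mul, ← pow_add]
      congr 1
      exact Nat.mod_add_div' (e + 1) p

/-- reduction to the prime field. Writing each variable `xᵢ = ∑ⱼ z_{ij} μⱼ`
in an `F_p`-basis `μ` of `F_q` (`q = p^a`), there are polynomials `G₁, …, G_a` over `F_p`
in the variables `z_{ij}`, each of total degree at most the `p`-weight `w_p(F)`, with
`F(x) = ∑_l G_l(z) μ_l`. -/
theorem reduction_to_prime_field (p a : ℕ) (hp : p.Prime) (ha : 0 < a)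
    (K : Type*) [Field K] [Fintype K] [Algebra (ZMod p) K]
    (hcard : Fintype.card K = p ^ a)
    (μ : Module.Basis (Fin a) (ZMod p) K)
    (n : ℕ) (F : MvPolynomial (Fin n) K) :
    ∃ G : Fin a → MvPolynomial (Fin n × Fin a) (ZMod p),
      (∀ l, (G l).totalDegree ≤ pWeight p F) ∧
      ∀ z : Fin n × Fin a → ZMod p,
        MvPolynomial.eval (fun i => ∑ j, z (i, j) • μ j) F =
          ∑ l, MvPolynomial.eval z (G l) • μ l := by
  haveI : Fact p.Prime := ⟨hp⟩
  haveI : CharP K p := charP_of_injective_algebraMap (algebraMap (ZMod p) K).injective p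
  -- the linear forms
  set L : Fin n → MvPolynomial (Fin n × Fin a) K :=
    fun i => ∑ j, MvPolynomial.X (i, j) * MvPolynomial.C (μ j) with hLdef
  have hLdeg : ∀ i, (L i).totalDegree ≤ 1 := by
    intro i
    refine (totalDegree_finset_sum _ _).trans (Finset.sup_le fun j _ => ?_)
    refine (totalDegree_mul _ _).trans ?_
    simp [totalDegree_X]
  -- the K-polynomial H
  set H : MvPolynomial (Fin n × Fin a) K :=
    ∑ u ∈ F.support, MvPolynomial.C (F.coeff u) * ∏ i, phiAux p (L i) (u i) with hHdef
  have hHdeg : H.totalDegree ≤ pWeight p F := by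
    refine (totalDegree_finset_sum _ _).trans (Finset.sup_le fun u hu => ?_)
    refine (totalDegree_mul _ _).trans ?_
    rw [totalDegree_C, zero_add]
    refine (totalDegree_finset_prod _ _).trans ?_
    have h2 : ∑ i, (phiAux p (L i) (u i)).totalDegree ≤
        ∑ i, (Nat.digits p (u i)).sum :=
      Finset.sum_le_sum fun i _ => phiAux_totalDegree p (L i) (hLdeg i) (u i)
    refine h2.trans ?_
    have h3 : (u.sum fun _ e => (Nat.digits p e).sum) = ∑ i, (Nat.digits p (u i)).sum :=
      Finsupp.sum_fintype _ _ (by simp)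
    rw [← h3]
    exact Finset.le_sup (f := fun u => u.sum fun _ e => (Nat.digits p e).sum) hu
  -- H evaluates correctly
  have hHeval : ∀ z : Fin n × Fin a → ZMod p,
      MvPolynomial.eval (fun v => algebraMap (ZMod p) K (z v)) H =
        MvPolynomial.eval (fun i => ∑ j, z (i, j) • μ j) F := by
    intro z
    have hz : ∀ v, (algebraMap (ZMod p) K (z v)) ^ p = algebraMap (ZMod p) K (z v) := by
      intro v
      rw [← map_pow, ZMod.pow_card]
    rw [hHdef, map_sum]
    conv_rhs => rw [MvPolynomial.eval_eq']
    refine Finset.sum_congr rfl fun u hu => ?_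
    rw [map_mul, MvPolynomial.eval_C, map_prod]
    congr 1
    refine Finset.prod_congr rfl fun i _ => ?_
    rw [phiAux_eval p (L i) _ hz (u i)]
    congr 1
    rw [hLdef]
    simp only [map_sum, map_mul, MvPolynomial.eval_X, MvPolynomial.eval_C]
    exact Finset.sum_congr rfl fun j _ => (Algebra.smul_def _ _).symm
  -- define G
  refine ⟨fun l => ∑ m ∈ H.support, MvPolynomial.monomial m (μ.repr (H.coeff m) l),
    fun l => ?_, fun z => ?_⟩
  · refine (totalDegree_finset_sum _ _).trans (Finset.sup_le fun m hm => ?_)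
    by_cases hc : (μ.repr (H.coeff m) l : ZMod p) = 0
    · simp [hc]
    · rw [totalDegree_monomial _ hc]
      exact (MvPolynomial.le_totalDegree hm).trans hHdeg
  · rw [← hHeval z]
    conv_lhs => rw [MvPolynomial.eval_eq']
    have hkey : ∀ m ∈ H.support, H.coeff m * ∏ v, algebraMap (ZMod p) K (z v) ^ m v =
        ∑ l, ((μ.repr (H.coeff m) l) * m.prod fun v e => z v ^ e) • μ l := by
      intro m _
      have hZ : (m.prod fun v e => z v ^ e) = ∏ v, z v ^ m v :=
        Finsupp.prod_fintype _ _ fun v => pow_zero _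
      calc H.coeff m * ∏ v, algebraMap (ZMod p) K (z v) ^ m v
          = (m.prod fun v e => z v ^ e) • H.coeff m := by
            rw [Algebra.smul_def, hZ, map_prod]
            simp only [map_pow]
            exact (mul_comm _ _)
        _ = (m.prod fun v e => z v ^ e) • ∑ l, (μ.repr (H.coeff m) l) • μ l := by
            rw [Module.Basis.sum_repr]
        _ = ∑ l, ((μ.repr (H.coeff m) l) * m.prod fun v e => z v ^ e) • μ l := by
            rw [Finset.smul_sum]
            exact Finset.sum_congr rfl fun l _ => by rw [mul_comm, mul_smul]
    rw [Finset.sum_congr rfl hkey, Finset.sum_comm]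
    refine Finset.sum_congr rfl fun l _ => ?_
    rw [map_sum, Finset.sum_smul]
    exact Finset.sum_congr rfl fun m _ => by rw [MvPolynomial.eval_monomial]
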